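/- Let F = (f_1,…,f_N) be a frame for an n-dimensional complex inner product space H, with frame operator S_F, and let p > 2. Set L := max_{1≤i≤N} ‖f_i‖·‖S_F^{-1} f_i‖, η₁ := {i : ‖f_i‖·‖S_F^{-1} f_i‖ = L}, η₂ := {1,…,N} \ η₁, and H_j := span{f_i : i ∈ η_j} for j = 1,2. Assume: (i) H₁ ∩ H₂ = {0}; (ii) there is a constant c > 0 with ‖f_i‖ = c for all i ∈ η₁; (iii) the family {f_i : i ∈ η₂} is linearly independent. Then every dual frame G of F satisfying ((1/N)∑_{i=1}^N (‖f_i‖·‖g_i‖)^p)^{1/p} ≤ ((1/N)∑_{i=1}^N (‖f_i‖·‖S_F^{-1}f_i‖)^p)^{1/p} must satisfy g_i = S_F^{-1} f_i for all i. In particular, the canonical dual S_F^{-1}F minimizes the 1-erasure Frobenius average error AE_F^{(1),p}(F,·) among all dual frames of F. -/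

import Mathlib

open scoped ComplexInnerProductSpace


lemma tangent_rpow {s t q : ℝ} (hs : 0 < s) (ht : 0 ≤ t) (hq : 1 ≤ q) :
    s ^ q + q * s ^ (q - 1) * (t - s) ≤ t ^ q := by
  have hd : -1 ≤ t / s - 1 := by
    have : 0 ≤ t / s := div_nonneg ht hs.le
    linarith
  have hb := one_add_mul_self_le_rpow_one_add hd hq
  rw [add_sub_cancel] at hb
  have hsq : (0:ℝ) < s ^ q := Real.rpow_pos_of_pos hs q
  have h2 : s ^ q * (1 + q * (t / s - 1)) ≤ s ^ q * (t / s) ^ q :=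
    mul_le_mul_of_nonneg_left hb hsq.le
  have h3 : s ^ q * (t / s) ^ q = t ^ q := by
    rw [← Real.mul_rpow hs.le (div_nonneg ht hs.le), mul_comm,
      div_mul_cancel₀ t hs.ne']
  have h4 : s ^ q = s ^ (q - 1) * s := by
    rw [← Real.rpow_add_one hs.ne' (q - 1), sub_add_cancel]
  rw [h3] at h2
  calc s ^ q + q * s ^ (q - 1) * (t - s)
      = s ^ q * (1 + q * (t / s - 1)) := by
        rw [h4]; field_simp
    _ ≤ t ^ q := h2

lemma trace_zero' {H : Type*} [NormedAddCommGroup H] [InnerProductSpace ℂ H]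
    [FiniteDimensional ℂ H] {N : ℕ} (f w : Fin N → H)
    (hw : ∀ x : H, ∑ i, ⟪w i, x⟫ • f i = 0) :
    ∑ i, ⟪f i, w i⟫ = 0 := by
  have b := stdOrthonormalBasis ℂ H
  have key : ∀ i, ⟪f i, w i⟫ = ∑ k, ⟪f i, b k⟫ * ⟪b k, w i⟫ := fun i =>
    (b.sum_inner_mul_inner _ _).symm
  calc ∑ i, ⟪f i, w i⟫ = ∑ i, ∑ k, ⟪f i, b k⟫ * ⟪b k, w i⟫ := by simp_rw [key]
    _ = ∑ k, ∑ i, ⟪f i, b k⟫ * ⟪b k, w i⟫ := Finset.sum_comm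
    _ = 0 := by
        refine Finset.sum_eq_zero fun k _ => ?_
        have h0 := congr_arg (fun v => ⟪v, b k⟫) (hw (b k))
        simp only [sum_inner, inner_smul_left, inner_zero_left, inner_conj_symm] at h0
        rw [← h0]
        exact Finset.sum_congr rfl fun i _ => mul_comm _ _

lemma sq_rpow_half (p : ℝ) {a : ℝ} (ha : 0 ≤ a) : (a ^ 2) ^ (p / 2) = a ^ p := by
  rw [← Real.rpow_natCast a 2, ← Real.rpow_mul ha]
  congr 1
  push_cast
  ring

lemma key_lemma {H : Type*} [NormedAddCommGroup H] [InnerProductSpace ℂ H]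
    [FiniteDimensional ℂ H] {N : ℕ} (f : Fin N → H) (Sinv : H →ₗ[ℂ] H)
    (hSinv₁ : ∀ x : H, ∑ i, ⟪f i, Sinv x⟫ • f i = x)
    (hSinv₂ : ∀ x : H, Sinv (∑ i, ⟪f i, x⟫ • f i) = x)
    (p : ℝ) (hp : 2 < p) (L : ℝ)
    (hinter : Submodule.span ℂ (f '' {i | ‖f i‖ * ‖Sinv (f i)‖ = L}) ⊓
        Submodule.span ℂ (f '' {i | ‖f i‖ * ‖Sinv (f i)‖ ≠ L}) = ⊥)
    (c : ℝ) (hc0 : 0 < c)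
    (hcc : ∀ i, ‖f i‖ * ‖Sinv (f i)‖ = L → ‖f i‖ = c)
    (hli : LinearIndependent ℂ
        (fun i : {i : Fin N // ‖f i‖ * ‖Sinv (f i)‖ ≠ L} => f (i : Fin N)))
    (hL0 : 0 < L)
    (g : Fin N → H) (hg : ∀ x : H, x = ∑ i, ⟪f i, x⟫ • g i)
    (hle : ∑ i, (‖f i‖ * ‖g i‖) ^ p ≤ ∑ i, (‖f i‖ * ‖Sinv (f i)‖) ^ p) :
    ∀ i, g i = Sinv (f i) := by
  classical
  set h : Fin N → H := fun i => Sinv (f i) with hh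
  set r : Fin N → ℝ := fun i => ‖f i‖ * ‖h i‖ with hr
  have hSadj : ∀ x y : H, ⟪Sinv x, y⟫ = ⟪x, Sinv y⟫ := by
    intro x y
    conv_lhs => rw [← hSinv₁ y]
    conv_rhs => rw [← hSinv₁ x]
    rw [inner_sum, sum_inner]
    refine Finset.sum_congr rfl fun i _ => ?_
    rw [inner_smul_right, inner_smul_left, inner_conj_symm, mul_comm]
  have hdual : ∀ x : H, x = ∑ i, ⟪f i, x⟫ • h i := by
    intro x
    conv_lhs => rw [← hSinv₂ x]
    rw [map_sum]
    exact Finset.sum_congr rfl fun i _ => map_smul _ _ _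
  set u : Fin N → H := fun i => g i - h i with hu
  have hu0 : ∀ x : H, ∑ i, ⟪f i, x⟫ • u i = 0 := by
    intro x
    have : ∑ i, ⟪f i, x⟫ • u i = (∑ i, ⟪f i, x⟫ • g i) - ∑ i, ⟪f i, x⟫ • h i := by
      rw [← Finset.sum_sub_distrib]
      exact Finset.sum_congr rfl fun i _ => smul_sub _ _ _
    rw [this, ← hg x, ← hdual x, sub_self]
  have hu1 : ∀ x : H, ∑ i, ⟪u i, x⟫ • f i = 0 := by
    intro x
    have hz : ∀ y : H, ⟪∑ i, ⟪u i, x⟫ • f i, y⟫ = 0 := by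
      intro y
      have h0 := congr_arg (fun v => ⟪x, v⟫) (hu0 y)
      simp only [inner_sum, inner_smul_right, inner_zero_right] at h0
      rw [sum_inner]
      simp only [inner_smul_left, inner_conj_symm]
      rw [← h0]
      exact Finset.sum_congr rfl fun i _ => mul_comm _ _
    have := hz (∑ i, ⟪u i, x⟫ • f i)
    rwa [inner_self_eq_zero] at this
  -- u vanishes on η₂
  have hu2 : ∀ i, r i ≠ L → u i = 0 := by
    intro i hi
    have hz : ∀ x : H, ⟪u i, x⟫ = 0 := by
      intro x
      have hsplit := hu1 x
      rw [← Finset.sum_filter_add_sum_filter_not Finset.univ (fun j => r j = L)] at hsplit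
      set v₁ := ∑ j ∈ Finset.univ.filter (fun j => r j = L), ⟪u j, x⟫ • f j with hv₁
      set v₂ := ∑ j ∈ Finset.univ.filter (fun j => ¬ r j = L), ⟪u j, x⟫ • f j with hv₂
      have hv₂mem : v₂ ∈ Submodule.span ℂ (f '' {j | ‖f j‖ * ‖Sinv (f j)‖ ≠ L}) := by
        refine Submodule.sum_mem _ fun j hj => Submodule.smul_mem _ _ ?_
        exact Submodule.subset_span ⟨j, by simpa [hr, hh] using hj, rfl⟩
      have hv₂mem' : v₂ ∈ Submodule.span ℂ (f '' {j | ‖f j‖ * ‖Sinv (f j)‖ = L}) := by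
        have hneg : v₂ = -v₁ := eq_neg_of_add_eq_zero_right hsplit
        rw [hneg]
        refine neg_mem (Submodule.sum_mem _ fun j hj => Submodule.smul_mem _ _ ?_)
        exact Submodule.subset_span ⟨j, by simpa [hr, hh] using hj, rfl⟩
      have hv20 : v₂ = 0 := by
        have : v₂ ∈ (⊥ : Submodule ℂ H) := by
          rw [← hinter]; exact ⟨hv₂mem', hv₂mem⟩
        simpa using this
      have hsum : ∑ j : {j : Fin N // ‖f j‖ * ‖Sinv (f j)‖ ≠ L},
          ⟪u (j : Fin N), x⟫ • f (j : Fin N) = 0 := by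
        have hst := Finset.sum_subtype (p := fun j => ‖f j‖ * ‖Sinv (f j)‖ ≠ L) (F := Subtype.fintype _)
          (Finset.univ.filter (fun j => ¬ r j = L))
          (fun j => by
            simp only [Finset.mem_filter, Finset.mem_univ, true_and]; exact Iff.rfl)
          (fun j => ⟪u j, x⟫ • f j)
        rw [← hv20, hv₂]
        exact hst.symm
      exact (Fintype.linearIndependent_iff.mp hli) (fun j => ⟪u (j : Fin N), x⟫) hsum ⟨i, hi⟩
    have := hz (u i)
    rwa [inner_self_eq_zero] at this
  -- trace identity
  have hall : ∑ i, ⟪h i, u i⟫ = 0 := by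
    have hw : ∀ x : H, ∑ i, ⟪Sinv (u i), x⟫ • f i = 0 := by
      intro x
      have h1 := hu1 (Sinv x)
      have : ∀ i, ⟪u i, Sinv x⟫ = ⟪Sinv (u i), x⟫ := fun i => (hSadj (u i) x).symm
      simp_rw [this] at h1
      exact h1
    have htr := trace_zero' f (fun i => Sinv (u i)) hw
    calc ∑ i, ⟪h i, u i⟫ = ∑ i, ⟪f i, Sinv (u i)⟫ :=
          Finset.sum_congr rfl fun i _ => hSadj (f i) (u i)
      _ = 0 := htr
  -- numeric part
  set η₁ := Finset.univ.filter (fun j => r j = L) with hη₁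
  have hcomp : ∀ i, i ∉ η₁ → u i = 0 := fun i hi => hu2 i (by simpa [hη₁] using hi)
  have htrace : ∑ i ∈ η₁, ⟪h i, u i⟫ = 0 := by
    rw [← hall]
    refine Finset.sum_subset (Finset.subset_univ _) ?_

    intro i _ hi
    rw [hcomp i hi, inner_zero_right]
  have q1 : (1:ℝ) ≤ p / 2 := by linarith
  set K := p / 2 * (L ^ 2) ^ (p / 2 - 1) * c ^ 2 with hK
  have hKpos : 0 < K := by
    have : (0:ℝ) < (L ^ 2) ^ (p / 2 - 1) := Real.rpow_pos_of_pos (by positivity) _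
    positivity
  have hperi : ∀ i ∈ η₁,
      r i ^ p + K * (2 * Complex.re ⟪h i, u i⟫ + ‖u i‖ ^ 2)
        ≤ (‖f i‖ * ‖g i‖) ^ p := by
    intro i hi
    have hiL : r i = L := by simpa [hη₁] using hi
    have hfi : ‖f i‖ = c := hcc i (by simpa [hr, hh] using hiL)
    have hhi : c * ‖h i‖ = L := by rw [← hfi]; exact hiL
    have hs : (0:ℝ) < L ^ 2 := by positivity
    have ht : (0:ℝ) ≤ (c * ‖g i‖) ^ 2 := sq_nonneg _
    have htan := tangent_rpow hs ht q1
    rw [sq_rpow_half p hL0.le, sq_rpow_half p (by positivity : (0:ℝ) ≤ c * ‖g i‖)] at htan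
    have hgu : g i = h i + u i := by simp [hu]
    have hnorm : ‖g i‖ ^ 2 = ‖h i‖ ^ 2 + 2 * Complex.re ⟪h i, u i⟫ + ‖u i‖ ^ 2 := by
      rw [hgu]
      exact norm_add_sq (𝕜 := ℂ) (h i) (u i)
    have hdiff : (c * ‖g i‖) ^ 2 - L ^ 2
        = c ^ 2 * (2 * Complex.re ⟪h i, u i⟫ + ‖u i‖ ^ 2) := by
      rw [← hhi]
      rw [mul_pow, mul_pow, hnorm]
      ring
    rw [hdiff] at htan
    rw [hiL, hfi]
    calc L ^ p + K * (2 * Complex.re ⟪h i, u i⟫ + ‖u i‖ ^ 2)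
        = L ^ p + p / 2 * (L ^ 2) ^ (p / 2 - 1)
            * (c ^ 2 * (2 * Complex.re ⟪h i, u i⟫ + ‖u i‖ ^ 2)) := by
          rw [hK]; ring
      _ ≤ (c * ‖g i‖) ^ p := htan
  -- sum over η₁
  have hsum1 : ∑ i ∈ η₁, r i ^ p + K * ∑ i ∈ η₁, ‖u i‖ ^ 2
      ≤ ∑ i ∈ η₁, (‖f i‖ * ‖g i‖) ^ p := by
    have hretr : ∑ i ∈ η₁, Complex.re ⟪h i, u i⟫ = 0 := by
      have := congrArg Complex.re htrace
      simpa [Complex.re_sum] using this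
    have hs := Finset.sum_le_sum hperi
    simp only [Finset.sum_add_distrib, ← Finset.mul_sum] at hs
    rw [hretr] at hs
    simpa [Finset.mul_sum] using hs
  -- complement terms equal
  have hcompeq : ∀ i ∈ Finset.univ.filter (fun j => ¬ r j = L),
      (‖f i‖ * ‖g i‖) ^ p = r i ^ p := by
    intro i hi
    have : u i = 0 := hu2 i (by simpa using hi)
    have : g i = h i := by
      have := sub_eq_zero.mp this
      exact this
    rw [this]
  -- combine with hle
  have hfinal : K * ∑ i ∈ η₁, ‖u i‖ ^ 2 ≤ 0 := by
    have e1 : ∑ i, (‖f i‖ * ‖g i‖) ^ p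
        = ∑ i ∈ η₁, (‖f i‖ * ‖g i‖) ^ p
          + ∑ i ∈ Finset.univ.filter (fun j => ¬ r j = L), (‖f i‖ * ‖g i‖) ^ p :=
      (Finset.sum_filter_add_sum_filter_not Finset.univ _ _).symm
    have e2 : ∑ i, r i ^ p
        = ∑ i ∈ η₁, r i ^ p
          + ∑ i ∈ Finset.univ.filter (fun j => ¬ r j = L), r i ^ p :=
      (Finset.sum_filter_add_sum_filter_not Finset.univ _ _).symm
    have hle' : ∑ i, (‖f i‖ * ‖g i‖) ^ p ≤ ∑ i, r i ^ p := hle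
    rw [e1, e2, Finset.sum_congr rfl hcompeq] at hle'
    linarith
  have husq : ∀ i ∈ η₁, ‖u i‖ ^ 2 = 0 := by
    have hsumle : ∑ i ∈ η₁, ‖u i‖ ^ 2 ≤ 0 := by
      have h0 : K * ∑ i ∈ η₁, ‖u i‖ ^ 2 ≤ K * 0 := by simpa using hfinal
      exact le_of_mul_le_mul_left h0 hKpos
    have hsumeq : ∑ i ∈ η₁, ‖u i‖ ^ 2 = 0 :=
      le_antisymm hsumle (Finset.sum_nonneg fun i _ => sq_nonneg _)
    exact fun i hi =>
      (Finset.sum_eq_zero_iff_of_nonneg fun j _ => sq_nonneg _).mp hsumeq i hi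
  intro i
  have hui : u i = 0 := by
    by_cases hiL : r i = L
    · have hmem : i ∈ η₁ := by simp [hη₁, hiL]
      have := husq i hmem
      have : ‖u i‖ = 0 := by nlinarith [norm_nonneg (u i)]
      exact norm_eq_zero.mp this
    · exact hu2 i hiL
  have := sub_eq_zero.mp hui
  exact this


theorem stmt_6 {H : Type*} [NormedAddCommGroup H] [InnerProductSpace ℂ H]
    [FiniteDimensional ℂ H] (n N : ℕ) (hn : Module.finrank ℂ H = n)
    (f : Fin N → H)
    (hframe : Submodule.span ℂ (Set.range f) = ⊤)
    (Sinv : H →ₗ[ℂ] H)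
    (hSinv₁ : ∀ x : H, ∑ i, ⟪f i, Sinv x⟫ • f i = x)
    (hSinv₂ : ∀ x : H, Sinv (∑ i, ⟪f i, x⟫ • f i) = x)
    (p : ℝ) (hp : 2 < p)
    (L : ℝ)
    (hLmax : IsGreatest (Set.range fun i => ‖f i‖ * ‖Sinv (f i)‖) L)
    (hinter : Submodule.span ℂ (f '' {i | ‖f i‖ * ‖Sinv (f i)‖ = L}) ⊓
        Submodule.span ℂ (f '' {i | ‖f i‖ * ‖Sinv (f i)‖ ≠ L}) = ⊥)
    (hc : ∃ c : ℝ, 0 < c ∧ ∀ i, ‖f i‖ * ‖Sinv (f i)‖ = L → ‖f i‖ = c)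
    (hli : LinearIndependent ℂ
        (fun i : {i : Fin N // ‖f i‖ * ‖Sinv (f i)‖ ≠ L} => f (i : Fin N))) :
    (∀ g : Fin N → H, (∀ x : H, x = ∑ i, ⟪f i, x⟫ • g i) →
        ((1 / (N : ℝ)) * ∑ i, (‖f i‖ * ‖g i‖) ^ p) ^ (1 / p) ≤
          ((1 / (N : ℝ)) * ∑ i, (‖f i‖ * ‖Sinv (f i)‖) ^ p) ^ (1 / p) →
        ∀ i, g i = Sinv (f i)) ∧
    (∀ g : Fin N → H, (∀ x : H, x = ∑ i, ⟪f i, x⟫ • g i) →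
        ((1 / (N : ℝ)) * ∑ i, (‖f i‖ * ‖Sinv (f i)‖) ^ p) ^ (1 / p) ≤
          ((1 / (N : ℝ)) * ∑ i, (‖f i‖ * ‖g i‖) ^ p) ^ (1 / p)) := by
  classical
  obtain ⟨c, hc0, hcc⟩ := hc
  obtain ⟨hLmem, hub'⟩ := hLmax
  obtain ⟨i₀, hi₀⟩ := hLmem
  have hNpos : (0:ℝ) < N := by
    have : 0 < N := i₀.pos
    exact_mod_cast this
  have hL0 : 0 < L := by
    have hfi₀ : ‖f i₀‖ = c := hcc i₀ hi₀
    have hne : Sinv (f i₀) ≠ 0 := by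
      intro h0
      have h1 := hSinv₁ (f i₀)
      rw [h0] at h1
      simp only [inner_zero_right, zero_smul, Finset.sum_const_zero] at h1
      rw [← h1] at hfi₀
      simp only [norm_zero] at hfi₀
      linarith
    calc (0:ℝ) < ‖f i₀‖ * ‖Sinv (f i₀)‖ := by
          rw [hfi₀]
          exact mul_pos hc0 (norm_pos_iff.mpr hne)
      _ = L := hi₀
  have hppos : (0:ℝ) < p := by linarith
  have reduce : ∀ g : Fin N → H,
      ((1 / (N : ℝ)) * ∑ i, (‖f i‖ * ‖g i‖) ^ p) ^ (1 / p) ≤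
        ((1 / (N : ℝ)) * ∑ i, (‖f i‖ * ‖Sinv (f i)‖) ^ p) ^ (1 / p) →
      ∑ i, (‖f i‖ * ‖g i‖) ^ p ≤ ∑ i, (‖f i‖ * ‖Sinv (f i)‖) ^ p := by
    intro g hle
    have hA : (0:ℝ) ≤ (1 / (N : ℝ)) * ∑ i, (‖f i‖ * ‖g i‖) ^ p := by
      refine mul_nonneg (by positivity) (Finset.sum_nonneg fun i _ => ?_)
      exact Real.rpow_nonneg (by positivity) _
    have hB : (0:ℝ) ≤ (1 / (N : ℝ)) * ∑ i, (‖f i‖ * ‖Sinv (f i)‖) ^ p := by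
      refine mul_nonneg (by positivity) (Finset.sum_nonneg fun i _ => ?_)
      exact Real.rpow_nonneg (by positivity) _
    rw [Real.rpow_le_rpow_iff hA hB (one_div_pos.mpr hppos)] at hle
    have hN' : (0:ℝ) < 1 / (N : ℝ) := by positivity
    exact (mul_le_mul_iff_right₀ hN').mp hle
  have first : ∀ g : Fin N → H, (∀ x : H, x = ∑ i, ⟪f i, x⟫ • g i) →
      ((1 / (N : ℝ)) * ∑ i, (‖f i‖ * ‖g i‖) ^ p) ^ (1 / p) ≤
        ((1 / (N : ℝ)) * ∑ i, (‖f i‖ * ‖Sinv (f i)‖) ^ p) ^ (1 / p) →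
      ∀ i, g i = Sinv (f i) := by
    intro g hg hle
    exact key_lemma f Sinv hSinv₁ hSinv₂ p hp L hinter c hc0 hcc hli hL0 g hg
      (reduce g hle)
  refine ⟨first, fun g hg => ?_⟩
  by_cases hle : ((1 / (N : ℝ)) * ∑ i, (‖f i‖ * ‖g i‖) ^ p) ^ (1 / p) ≤
      ((1 / (N : ℝ)) * ∑ i, (‖f i‖ * ‖Sinv (f i)‖) ^ p) ^ (1 / p)
  · have heq := first g hg hle
    have hsums : ∑ i, (‖f i‖ * ‖g i‖) ^ p = ∑ i, (‖f i‖ * ‖Sinv (f i)‖) ^ p :=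
      Finset.sum_congr rfl fun i _ => by rw [heq i]
    rw [hsums]
  · exact (lt_of_not_ge hle).le
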